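/- For every integer N ≥ 0, the following identity of polynomials in z over ℚ holds: (z+N+2)(z+N+3)⋯(z+2N+1)/N! = Σ_{k=0}^{N} 4^{N-k} · (3/2)_{N-k} · (z+k)_k / ((3)_{N-k} · k!), where (a)_m denotes the rising factorial (a)_0 = 1, (a)_m = a(a+1)⋯(a+m-1); in particular the left-hand side is (z+N+2)_N / N!. -/

import Mathlib

open Polynomial Finset Nat

/-- coefficient of `(1-X)^m` -/
lemma coeff_one_sub_X_pow (m j : ℕ) :
    (((1 : ℚ[X]) - X) ^ m).coeff j = (-1 : ℚ) ^ j * (m.choose j) := by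
  induction m generalizing j with
  | zero =>
    cases j with
    | zero => simp
    | succ j => simp [coeff_one]
  | succ m ih =>
    have h : ((1 : ℚ[X]) - X) ^ (m+1) = ((1:ℚ[X]) - X)^m - ((1:ℚ[X]) - X)^m * X := by
      ring
    rw [h]
    cases j with
    | zero =>
      simp only [coeff_sub, coeff_mul_X_pow'] at *
      simpa using ih 0
    | succ j =>
      rw [coeff_sub, coeff_mul_X, ih, ih, Nat.choose_succ_succ]
      push_cast
      ring

/-- coefficient of `(X(1-X))^m` -/
lemma coeff_y_pow (m n : ℕ) :
    ((X * ((1:ℚ[X]) - X)) ^ m).coeff n =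
      if m ≤ n then (-1 : ℚ) ^ (n - m) * ((m.choose (n - m) : ℕ) : ℚ) else 0 := by
  rw [mul_pow, mul_comm, coeff_mul_X_pow']
  split <;> simp [coeff_one_sub_X_pow]

lemma coeff_y_pow_of_lt {m n : ℕ} (h : n < m) :
    ((X * ((1:ℚ[X]) - X)) ^ m).coeff n = 0 := by
  rw [coeff_y_pow, if_neg (by omega)]

noncomputable def dseq (n : ℕ) : ℚ :=
  ∑ k ∈ Finset.range (n+1), (-1:ℚ)^k * ((n - k).choose k : ℚ) * (catalan (n - k) : ℚ)

noncomputable def pp (M : ℕ) : ℚ[X] :=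
  ∑ m ∈ Finset.range M, Polynomial.C (catalan m : ℚ) * (X * ((1:ℚ[X]) - X)) ^ m

lemma coeff_pp {n M : ℕ} (h : n < M) : (pp M).coeff n = dseq n := by
  unfold pp dseq
  rw [finset_sum_coeff]
  have hz : ∀ m ∈ Finset.range M, m ∉ Finset.range (n+1) →
      (Polynomial.C (catalan m : ℚ) * (X * ((1:ℚ[X]) - X)) ^ m).coeff n = 0 := by
    intro m _ hm
    rw [coeff_C_mul, coeff_y_pow_of_lt (by simp at hm; omega), mul_zero]
  rw [← Finset.sum_subset (Finset.range_subset_range.2 (by omega)) hz]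
  rw [← Finset.sum_range_reflect]
  apply Finset.sum_congr rfl
  intro k hk
  simp only [Finset.mem_range] at hk
  have hk' : k ≤ n := by omega
  have h1 : n + 1 - 1 - k = n - k := by omega
  rw [h1, coeff_C_mul, coeff_y_pow, if_pos (by omega)]
  have h2 : n - (n - k) = k := by omega
  rw [h2]
  ring

lemma struct {M n : ℕ} (h0 : 0 < n) (hn : n < M) :
    (pp (M+1)).coeff n = ((X * ((1:ℚ[X]) - X)) * (pp M * pp M)).coeff n := by
  have expand : (X * ((1:ℚ[X]) - X)) * (pp M * pp M) =
      ∑ i ∈ Finset.range M, ∑ j ∈ Finset.range M,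
        Polynomial.C ((catalan i : ℚ) * (catalan j : ℚ)) * (X * ((1:ℚ[X]) - X)) ^ (i+j+1) := by
    unfold pp
    rw [Finset.sum_mul_sum, Finset.mul_sum]
    apply Finset.sum_congr rfl; intro i _
    rw [Finset.mul_sum]
    apply Finset.sum_congr rfl; intro j _
    rw [Polynomial.C_mul]
    ring
  rw [expand]
  simp only [finset_sum_coeff, coeff_C_mul]
  have hsq : ∀ p : ℕ × ℕ, p ∈ Finset.range M ×ˢ Finset.range M → p.1 + p.2 ∈ Finset.range (2*M) := by
    intro p hp; simp only [Finset.mem_product, Finset.mem_range] at hp ⊢; omega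
  have regroup :
      (∑ i ∈ Finset.range M, ∑ j ∈ Finset.range M,
        (catalan i : ℚ) * (catalan j : ℚ) * ((X * ((1:ℚ[X]) - X)) ^ (i+j+1)).coeff n)
      = ∑ s ∈ Finset.range (2*M), ∑ p ∈ (Finset.range M ×ˢ Finset.range M).filter
          (fun p => p.1 + p.2 = s),
          (catalan p.1 : ℚ) * (catalan p.2 : ℚ) * ((X * ((1:ℚ[X]) - X)) ^ (p.1+p.2+1)).coeff n := by
    rw [Finset.sum_fiberwise_of_maps_to hsq]
    rw [Finset.sum_product]
  rw [regroup]
  have fiber : ∀ s ∈ Finset.range (2*M),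
      (∑ p ∈ (Finset.range M ×ˢ Finset.range M).filter (fun p => p.1 + p.2 = s),
        (catalan p.1 : ℚ) * (catalan p.2 : ℚ) * ((X * ((1:ℚ[X]) - X)) ^ (p.1+p.2+1)).coeff n)
      = (catalan (s+1) : ℚ) * ((X * ((1:ℚ[X]) - X)) ^ (s+1)).coeff n := by
    intro s _
    by_cases hs : s + 1 ≤ n
    · have hfil : (Finset.range M ×ˢ Finset.range M).filter (fun p => p.1 + p.2 = s)
          = Finset.HasAntidiagonal.antidiagonal s := by
        ext ⟨a, b⟩
        simp only [Finset.mem_filter, Finset.mem_product, Finset.mem_range,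
          Finset.HasAntidiagonal.mem_antidiagonal]
        omega
      rw [hfil]
      have hcg : ∀ p ∈ Finset.HasAntidiagonal.antidiagonal s,
          (catalan p.1 : ℚ) * (catalan p.2 : ℚ) * ((X * ((1:ℚ[X]) - X)) ^ (p.1+p.2+1)).coeff n
          = (catalan p.1 : ℚ) * (catalan p.2 : ℚ) * ((X * ((1:ℚ[X]) - X)) ^ (s+1)).coeff n := by
        intro p hp; rw [Finset.HasAntidiagonal.mem_antidiagonal] at hp; rw [hp]
      rw [Finset.sum_congr rfl hcg, ← Finset.sum_mul]
      have hcat : (∑ p ∈ Finset.HasAntidiagonal.antidiagonal s, (catalan p.1 : ℚ) * (catalan p.2 : ℚ))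
          = (catalan (s+1) : ℚ) := by
        rw [catalan_succ']
        push_cast
        rfl
      rw [hcat]
    · have hz : ((X * ((1:ℚ[X]) - X)) ^ (s+1)).coeff n = 0 := coeff_y_pow_of_lt (by omega)
      rw [hz, mul_zero]
      apply Finset.sum_eq_zero
      intro p hp
      simp only [Finset.mem_filter] at hp
      rw [hp.2, hz, mul_zero]
  rw [Finset.sum_congr rfl fiber]
  unfold pp
  rw [finset_sum_coeff]
  simp only [coeff_C_mul]
  rw [Finset.sum_range_succ']
  have h00 : (catalan 0 : ℚ) * ((X * ((1:ℚ[X]) - X)) ^ 0).coeff n = 0 := by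
    simp [coeff_one, h0.ne']
  rw [h00, add_zero]
  have big : ∀ (K : ℕ), n ≤ K →
      (∑ s ∈ Finset.range K, (catalan (s+1) : ℚ) * ((X * ((1:ℚ[X]) - X)) ^ (s+1)).coeff n)
      = ∑ s ∈ Finset.range n, (catalan (s+1) : ℚ) * ((X * ((1:ℚ[X]) - X)) ^ (s+1)).coeff n := by
    intro K hK
    rw [← Finset.sum_subset (Finset.range_subset_range.2 hK)]
    intro s _ hs
    rw [coeff_y_pow_of_lt (by simp at hs; omega), mul_zero]
  rw [big M (by omega), big (2*M) (by omega)]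

lemma dseq_eq_one (n : ℕ) : dseq n = 1 := by
  induction n using Nat.strong_induction_on with
  | _ n ih =>
    match n with
    | 0 => simp [dseq]
    | (n+1) =>
      set M := n + 2 with hM
      have h1 : dseq (n+1) = (pp (M+1)).coeff (n+1) := (coeff_pp (by omega)).symm
      rw [h1, struct (by omega) (by omega)]
      set W := pp M * pp M with hW
      have hWc : ∀ s, s ≤ n → W.coeff s = (s : ℚ) + 1 := by
        intro s hs
        rw [hW, Polynomial.coeff_mul]
        have : ∀ p ∈ Finset.HasAntidiagonal.antidiagonal s, (pp M).coeff p.1 * (pp M).coeff p.2 = 1 := by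
          intro p hp
          rw [Finset.HasAntidiagonal.mem_antidiagonal] at hp
          rw [coeff_pp (by omega), coeff_pp (by omega), ih p.1 (by omega), ih p.2 (by omega),
            one_mul]
        rw [Finset.sum_congr rfl this, Finset.sum_const, Finset.Nat.card_antidiagonal]
        simp
      have hexp : (X * ((1:ℚ[X]) - X)) * W = X * W - X * (X * W) := by ring
      rw [hexp, coeff_sub, coeff_X_mul]
      have h2 : (X * (X * W)).coeff (n+1) = (n : ℚ) := by
        match n with
        | 0 => simp
        | (m+1) =>
          rw [coeff_X_mul, coeff_X_mul, hWc m (by omega)]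
          push_cast; ring
      rw [h2, hWc n (by omega)]
      ring

lemma r_succ_right (n : ℕ) (x : ℚ) :
    (ascPochhammer ℚ (n+1)).eval x = (ascPochhammer ℚ n).eval x * (x + n) := by
  rw [ascPochhammer_succ_right]
  simp

lemma r_succ_left (n : ℕ) (x : ℚ) :
    (ascPochhammer ℚ (n+1)).eval x = x * (ascPochhammer ℚ n).eval (x+1) := by
  rw [ascPochhammer_succ_left]
  simp [eval_comp]

lemma r_diff (n : ℕ) (x : ℚ) :
    (ascPochhammer ℚ (n+1)).eval (x+1) - (ascPochhammer ℚ (n+1)).eval x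
      = ((n:ℚ)+1) * (ascPochhammer ℚ n).eval (x+1) := by
  rw [r_succ_right, r_succ_left]
  ring

lemma r_one (n : ℕ) : (ascPochhammer ℚ n).eval 1 = (n ! : ℚ) := by
  induction n with
  | zero => simp
  | succ n ih =>
    rw [r_succ_right, ih, factorial_succ]
    push_cast
    ring

lemma r_neg (m k : ℕ) :
    (ascPochhammer ℚ k).eval (-(m:ℚ)) = (-1:ℚ)^k * (m.descFactorial k : ℚ) := by
  induction k with
  | zero => simp
  | succ k ih =>
    rw [r_succ_right, ih, Nat.descFactorial_succ]
    by_cases h : k ≤ m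
    · push_cast [h]
      ring
    · have h1 : m.descFactorial k = 0 := by
        rw [Nat.descFactorial_eq_zero_iff_lt]; omega
      have h2 : m - k = 0 := by omega
      rw [h1, h2]
      push_cast
      ring

lemma asc3_pos (n : ℕ) : 0 < (ascPochhammer ℚ n).eval 3 := by
  induction n with
  | zero => simp
  | succ n ih =>
    rw [r_succ_right]
    positivity

lemma cat_ratio (n : ℕ) : (n+3) * catalan (n+2) = (4*n+6) * catalan (n+1) := by
  have h1 := succ_mul_catalan_eq_centralBinom (n+1)
  have h2 := succ_mul_catalan_eq_centralBinom (n+2)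
  have h3 := Nat.succ_mul_centralBinom_succ (n+1)
  -- (n+2) * cB(n+2) = 2*(2n+3)*cB(n+1)
  have key : (n+2) * ((n+3) * catalan (n+2)) = (n+2) * ((4*n+6) * catalan (n+1)) := by
    calc (n+2) * ((n+3) * catalan (n+2)) = (n+2) * ((n+2+1) * catalan (n+2)) := by ring
    _ = (n+2) * (n+2).centralBinom := by rw [h2]
    _ = 2 * (2*(n+1)+1) * (n+1).centralBinom := by
        have : n + 2 = n + 1 + 1 := by ring
        rw [this, h3]
    _ = 2 * (2*n+3) * ((n+1+1) * catalan (n+1)) := by rw [h1]; ring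
    _ = (n+2) * ((4*n+6) * catalan (n+1)) := by ring
  exact Nat.eq_of_mul_eq_mul_left (by omega) key

lemma coeffQ (n : ℕ) :
    (4:ℚ)^n * (ascPochhammer ℚ n).eval (3/2 : ℚ)
      = (catalan (n+1) : ℚ) * (ascPochhammer ℚ n).eval (3:ℚ) := by
  induction n with
  | zero => simp
  | succ n ih =>
    rw [r_succ_right, r_succ_right]
    have hc : ((n:ℚ)+3) * (catalan (n+2) : ℚ) = (4*(n:ℚ)+6) * (catalan (n+1) : ℚ) := by
      exact_mod_cast cat_ratio n
    push_cast
    push_cast at ih hc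
    linear_combination (4*(n:ℚ)+6) * ih - (ascPochhammer ℚ n).eval (3:ℚ) * hc

theorem main' (N : ℕ) :
    Polynomial.C ((N ! : ℚ))⁻¹ * (ascPochhammer ℚ N).comp (X + Polynomial.C ((N:ℚ) + 2))
      = ∑ k ∈ Finset.range (N+1),
          Polynomial.C ((catalan (N+1-k) : ℚ) / (k ! : ℚ)) *
            (ascPochhammer ℚ k).comp (X + Polynomial.C ((k:ℚ))) := by
  induction N with
  | zero => simp [ascPochhammer_zero, catalan_one]
  | succ N ih =>
    rw [← sub_eq_zero]
    set D : ℚ[X] :=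
      Polynomial.C (((N+1)! : ℚ))⁻¹ *
          (ascPochhammer ℚ (N+1)).comp (X + Polynomial.C ((((N+1):ℕ):ℚ) + 2))
        - ∑ k ∈ Finset.range (N+1+1),
            Polynomial.C ((catalan (N+1+1-k) : ℚ) / (k ! : ℚ)) *
              (ascPochhammer ℚ k).comp (X + Polynomial.C ((k:ℚ))) with hD
    have hDeval : ∀ t : ℚ, D.eval t
        = ((N+1)! : ℚ)⁻¹ * (ascPochhammer ℚ (N+1)).eval (t + ((((N+1):ℕ):ℚ) + 2))
          - ∑ k ∈ Finset.range (N+1+1),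
              (catalan (N+1+1-k) : ℚ) / (k ! : ℚ) * (ascPochhammer ℚ k).eval (t + (k:ℚ)) := by
      intro t
      simp [hD, eval_finset_sum]
    -- shift invariance
    have hshift : ∀ x : ℚ, D.eval (x+1) = D.eval x := by
      intro x
      have hIH := congrArg (Polynomial.eval (x+2)) ih
      simp only [eval_mul, eval_C, eval_comp, eval_add, eval_X, eval_finset_sum] at hIH
      rw [hDeval, hDeval]
      have hA : ((N+1)! : ℚ)⁻¹ * (ascPochhammer ℚ (N+1)).eval (x+1 + ((((N+1):ℕ):ℚ) + 2))
          - ((N+1)! : ℚ)⁻¹ * (ascPochhammer ℚ (N+1)).eval (x + ((((N+1):ℕ):ℚ) + 2))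
          = (N ! : ℚ)⁻¹ * (ascPochhammer ℚ N).eval (x + 2 + ((N:ℚ) + 2)) := by
        have e1 : x + 1 + ((((N+1):ℕ):ℚ) + 2) = (x + ((((N+1):ℕ):ℚ) + 2)) + 1 := by ring
        have hd := r_diff N (x + ((((N+1):ℕ):ℚ) + 2))
        have e2 : x + ((((N+1):ℕ):ℚ) + 2) + 1 = x + 2 + ((N:ℚ) + 2) := by push_cast; ring
        rw [e2] at hd
        rw [e1, e2]
        have hf : (((N+1)! : ℕ) : ℚ) = ((N:ℚ)+1) * (N ! : ℚ) := by
          rw [Nat.factorial_succ]; push_cast; ring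
        have hne : ((N !: ℕ) : ℚ) ≠ 0 := Nat.cast_ne_zero.2 (Nat.factorial_ne_zero N)
        have hne2 : ((N:ℚ)+1) ≠ 0 := by positivity
        calc (((N+1)! : ℕ) : ℚ)⁻¹ * (ascPochhammer ℚ (N+1)).eval (x + 2 + ((N:ℚ) + 2))
              - (((N+1)! : ℕ) : ℚ)⁻¹ * (ascPochhammer ℚ (N+1)).eval (x + ((((N+1):ℕ):ℚ) + 2))
            = (((N+1)! : ℕ) : ℚ)⁻¹ * ((ascPochhammer ℚ (N+1)).eval (x + 2 + ((N:ℚ) + 2))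
              - (ascPochhammer ℚ (N+1)).eval (x + ((((N+1):ℕ):ℚ) + 2))) := by ring
          _ = (((N+1)! : ℕ) : ℚ)⁻¹ * (((N:ℚ)+1) * (ascPochhammer ℚ N).eval (x + 2 + ((N:ℚ) + 2))) := by
              rw [hd]
          _ = (N ! : ℚ)⁻¹ * (ascPochhammer ℚ N).eval (x + 2 + ((N:ℚ) + 2)) := by
              rw [hf]
              field_simp
      have hB : (∑ k ∈ Finset.range (N+1+1),
              (catalan (N+1+1-k) : ℚ) / (k ! : ℚ) * (ascPochhammer ℚ k).eval (x + 1 + (k:ℚ)))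
          - (∑ k ∈ Finset.range (N+1+1),
              (catalan (N+1+1-k) : ℚ) / (k ! : ℚ) * (ascPochhammer ℚ k).eval (x + (k:ℚ)))
          = ∑ j ∈ Finset.range (N+1),
              (catalan (N+1-j) : ℚ) / (j ! : ℚ) * (ascPochhammer ℚ j).eval (x + 2 + (j:ℚ)) := by
        rw [← Finset.sum_sub_distrib, Finset.sum_range_succ']
        have h0 : (catalan (N+1+1-0) : ℚ) / ((0:ℕ)! : ℚ) *
              (ascPochhammer ℚ 0).eval (x + 1 + ((0:ℕ):ℚ))
            - (catalan (N+1+1-0) : ℚ) / ((0:ℕ)! : ℚ) *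
              (ascPochhammer ℚ 0).eval (x + ((0:ℕ):ℚ)) = 0 := by
          simp [ascPochhammer_zero]
        rw [h0, add_zero]
        apply Finset.sum_congr rfl
        intro j hj
        have hcat : N+1+1-(j+1) = N+1-j := by omega
        rw [hcat]
        push_cast
        have e1 : x + 1 + ((j:ℚ) + 1) = (x + ((j:ℚ)+1)) + 1 := by ring
        rw [e1]
        have hd := r_diff j (x + ((j:ℚ)+1))
        have e2 : x + ((j:ℚ)+1) + 1 = x + 2 + (j:ℚ) := by ring
        rw [e2] at hd ⊢
        have hne : ((j !: ℕ) : ℚ) ≠ 0 := Nat.cast_ne_zero.2 (Nat.factorial_ne_zero j)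
        have hne2 : ((j:ℚ)+1) ≠ 0 := by positivity
        have hf : (((j+1)! : ℕ) : ℚ) = ((j:ℚ)+1) * (j ! : ℚ) := by
          rw [Nat.factorial_succ]; push_cast; ring
        rw [hf]
        calc (catalan (N+1-j) : ℚ) / (((j:ℚ)+1) * (j ! : ℚ)) *
                (ascPochhammer ℚ (j+1)).eval (x + 2 + (j:ℚ))
              - (catalan (N+1-j) : ℚ) / (((j:ℚ)+1) * (j ! : ℚ)) *
                (ascPochhammer ℚ (j+1)).eval (x + ((j:ℚ)+1))
            = (catalan (N+1-j) : ℚ) / (((j:ℚ)+1) * (j ! : ℚ)) *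
                ((ascPochhammer ℚ (j+1)).eval (x + 2 + (j:ℚ))
                  - (ascPochhammer ℚ (j+1)).eval (x + ((j:ℚ)+1))) := by ring
          _ = (catalan (N+1-j) : ℚ) / (((j:ℚ)+1) * (j ! : ℚ)) *
                (((j:ℚ)+1) * (ascPochhammer ℚ j).eval (x + 2 + (j:ℚ))) := by rw [hd]
          _ = (catalan (N+1-j) : ℚ) / (j ! : ℚ) * (ascPochhammer ℚ j).eval (x + 2 + (j:ℚ)) := by
              field_simp
      linarith [hA, hB, hIH]
    -- anchor
    have hanchor : D.eval (-((N:ℚ)+2)) = 0 := by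
      rw [hDeval]
      have hA : -((N:ℚ)+2) + ((((N+1):ℕ):ℚ) + 2) = 1 := by push_cast; ring
      rw [hA, r_one]
      have hfne : (((N+1)! : ℕ) : ℚ) ≠ 0 := Nat.cast_ne_zero.2 (Nat.factorial_ne_zero _)
      rw [inv_mul_cancel₀ hfne]
      have hterm : ∀ k ∈ Finset.range (N+1+1),
          (catalan (N+1+1-k) : ℚ) / (k ! : ℚ) * (ascPochhammer ℚ k).eval (-((N:ℚ)+2) + (k:ℚ))
          = (-1:ℚ)^k * ((N+1+1-k).choose k : ℚ) * (catalan (N+1+1-k) : ℚ) := by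
        intro k hk
        simp only [Finset.mem_range] at hk
        have e : -((N:ℚ)+2) + (k:ℚ) = -(((N+1+1-k : ℕ)):ℚ) := by
          have hk2 : k ≤ N+1+1 := by omega
          push_cast [Nat.cast_sub hk2]
          ring
        rw [e, r_neg, Nat.descFactorial_eq_factorial_mul_choose]
        have hne : ((k !: ℕ) : ℚ) ≠ 0 := Nat.cast_ne_zero.2 (Nat.factorial_ne_zero k)
        push_cast
        field_simp
      rw [Finset.sum_congr rfl hterm]
      have hds := dseq_eq_one (N+1+1)
      unfold dseq at hds
      rw [Finset.sum_range_succ] at hds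
      have hlast : (-1:ℚ)^(N+1+1) * (((N+1+1-(N+1+1)).choose (N+1+1)) : ℚ)
          * (catalan (N+1+1-(N+1+1)) : ℚ) = 0 := by
        simp [Nat.choose_eq_zero_of_lt]
      rw [hlast, add_zero] at hds
      rw [hds]
      ring
    -- roots along a lattice
    have hroot : ∀ n : ℕ, D.eval (-((N:ℚ)+2) + (n:ℚ)) = 0 := by
      intro n
      induction n with
      | zero => simpa using hanchor
      | succ n ihn =>
        have e : -((N:ℚ)+2) + (((n+1):ℕ):ℚ) = (-((N:ℚ)+2) + (n:ℚ)) + 1 := by push_cast; ring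
        rw [e, hshift, ihn]
    apply Polynomial.eq_zero_of_infinite_isRoot
    apply Set.infinite_of_injective_forall_mem
      (f := fun n : ℕ => -((N:ℚ)+2) + (n:ℚ))
    · intro a b hab
      simp only at hab
      have : (a:ℚ) = (b:ℚ) := by linarith
      exact_mod_cast this
    · intro n
      simp only [Set.mem_setOf_eq, Polynomial.IsRoot]
      exact hroot n

theorem statement18 (N : ℕ) :
    Polynomial.C ((N ! : ℚ))⁻¹ *
        (ascPochhammer ℚ N).comp (Polynomial.X + Polynomial.C ((N : ℚ) + 2)) =
      ∑ k ∈ Finset.range (N + 1),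
        Polynomial.C ((4 : ℚ) ^ (N - k) * (ascPochhammer ℚ (N - k)).eval ((3 : ℚ) / 2) /
            ((ascPochhammer ℚ (N - k)).eval (3 : ℚ) * (k ! : ℚ))) *
          (ascPochhammer ℚ k).comp (Polynomial.X + Polynomial.C (k : ℚ)) := by
  rw [main' N]
  apply Finset.sum_congr rfl
  intro k hk
  simp only [Finset.mem_range] at hk
  congr 1
  have hn : N+1-k = (N-k)+1 := by omega
  rw [hn]
  have h := coeffQ (N-k)
  have h3 : (ascPochhammer ℚ (N-k)).eval (3:ℚ) ≠ 0 := (asc3_pos _).ne'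
  have hkf : ((k ! : ℕ) : ℚ) ≠ 0 := Nat.cast_ne_zero.2 (Nat.factorial_ne_zero k)
  rw [Polynomial.C_inj]
  field_simp
  linear_combination (-1 : ℚ) * h
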